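/- arXiv:math/0209230 — 5 statements merged into one kernel-verified Lean document; each statement's English description precedes it below -/
import Mathlib

section
/- Let f : X → Y be a perfect continuous surjection between metrizable spaces, ω an open cover of X, m and p positive integers, and g ∈ C(X, I^p). If the restriction of f△g to the fiber f⁻¹(y) is an (m,ω)-map for some y ∈ Y, then there exists a neighborhood U_y of y in Y such that the restriction g|f⁻¹(U_y) is an (m,ω)-map. -/
open Set Topology

noncomputable section

/-- The unit cube `I^n` inside Euclidean `n`-space (with the Euclidean metric). -/
abbrev Cube (n : ℕ) : Type :=
  {x : EuclideanSpace ℝ (Fin n) // ∀ i, x i ∈ Set.Icc (0 : ℝ) 1}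

/-- `CovDimLE X n` : the covering (Lebesgue) dimension of `X` is at most `n`, i.e. every
finite open cover of `X` admits an open shrinking of order at most `n + 1`. -/
def CovDimLE (X : Type) [TopologicalSpace X] (n : ℕ) : Prop :=
  ∀ (ι : Type) (_ : Finite ι) (U : ι → Set X),
    (∀ i, IsOpen (U i)) → (⋃ i, U i) = Set.univ →
      ∃ V : ι → Set X, (∀ i, IsOpen (V i)) ∧ (∀ i, V i ⊆ U i) ∧ (⋃ i, V i) = Set.univ ∧
        ∀ x : X, {i | x ∈ V i}.ncard ≤ n + 1

/-- A map is `k`-dimensional if all of its fibers have covering dimension at most `k`. -/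
def DimFibersLE {X Y : Type} [TopologicalSpace X] [TopologicalSpace Y]
    (f : X → Y) (k : ℕ) : Prop :=
  ∀ y : Y, CovDimLE (f ⁻¹' {y}) k

/-- A perfect map: continuous, closed, with compact fibers. -/
def IsPerfectMap {X Y : Type} [TopologicalSpace X] [TopologicalSpace Y] (f : X → Y) : Prop :=
  Continuous f ∧ IsClosedMap f ∧ ∀ y : Y, IsCompact (f ⁻¹' {y})

/-- `f` is σ-perfect: `X` is a countable union of closed sets `A i` such that each
restriction `f|A i : A i → f(A i)` is perfect. -/
def IsSigmaPerfect {X Y : Type} [TopologicalSpace X] [TopologicalSpace Y] (f : X → Y) : Prop :=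
  ∃ A : ℕ → Set X, (∀ i, IsClosed (A i)) ∧ (⋃ i, A i) = Set.univ ∧
    ∀ i, IsPerfectMap fun x : A i => (⟨f x, Set.mem_image_of_mem f x.2⟩ : f '' A i)

/-- The source limitation topology on `C(X, M)`. -/
def sourceLimitation (X M : Type) [TopologicalSpace X] [MetricSpace M] :
    TopologicalSpace C(X, M) where
  IsOpen U := ∀ g ∈ U, ∃ α : X → ℝ, Continuous α ∧ (∀ x, 0 < α x) ∧
      {h : C(X, M) | ∀ x, dist (g x) (h x) ≤ α x} ⊆ U
  isOpen_univ := fun _ _ =>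
    ⟨fun _ => 1, continuous_const, fun _ => one_pos, fun _ _ => trivial⟩
  isOpen_inter := by
    intro U V hU hV g hg
    obtain ⟨α, hαc, hα0, hαU⟩ := hU g hg.1
    obtain ⟨β, hβc, hβ0, hβV⟩ := hV g hg.2
    refine ⟨fun x => min (α x) (β x), hαc.min hβc, fun x => lt_min (hα0 x) (hβ0 x), ?_⟩
    intro h hh
    exact ⟨hαU fun x => le_trans (hh x) (min_le_left _ _),
      hβV fun x => le_trans (hh x) (min_le_right _ _)⟩
  isOpen_sUnion := by
    intro S hS g hg
    obtain ⟨t, ht, hgt⟩ := hg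
    obtain ⟨α, h1, h2, h3⟩ := hS t ht g hgt
    exact ⟨α, h1, h2, fun h hh => ⟨t, ht, h3 hh⟩⟩

/-- The topology of uniform convergence on `C(X, M)`. -/
def uniformConvergence (X M : Type) [TopologicalSpace X] [UniformSpace M] :
    TopologicalSpace C(X, M) :=
  TopologicalSpace.induced (fun g : C(X, M) => UniformFun.ofFun ⇑g) inferInstance

/-- The uniformity of uniform convergence on `C(X, M)`. -/
def uniformConvergenceUniformity (X M : Type) [TopologicalSpace X] [UniformSpace M] :
    UniformSpace C(X, M) :=
  UniformSpace.comap (fun g : C(X, M) => UniformFun.ofFun ⇑g) inferInstance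

/-- `g` restricted to `H` is an `(m, ω)`-map: every point of `g(H)` has a neighborhood `V`
such that the part of `g ⁻¹ V` lying in `H` can be covered by at most `m` members of `ω`. -/
def IsMOmegaMapOn {X Z : Type} [TopologicalSpace X] [TopologicalSpace Z]
    (m : ℕ) (ω : Set (Set X)) (g : X → Z) (H : Set X) : Prop :=
  ∀ z ∈ g '' H, ∃ V ∈ nhds z, ∃ s : Finset (Set X),
    ↑s ⊆ ω ∧ s.card ≤ m ∧ H ∩ g ⁻¹' V ⊆ ⋃₀ ↑s

/-- A closed set `F` in `M` is a `Z_n`-set if the maps `I^n → M` avoiding `F` are dense in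
`C(I^n, M)` with the uniform convergence topology. -/
def IsZSet (n : ℕ) (M : Type) [UniformSpace M] (F : Set M) : Prop :=
  IsClosed F ∧
    @Dense C(Cube n, M)
      (TopologicalSpace.induced (fun u : C(Cube n, M) => UniformFun.ofFun ⇑u) inferInstance)
      {u : C(Cube n, M) | ∀ t, u t ∉ F}

end


instance cubeCompact (p : ℕ) : CompactSpace (Cube p) := by
  have h : {x : EuclideanSpace ℝ (Fin p) | ∀ i, x i ∈ Set.Icc (0 : ℝ) 1}
      = ⇑(EuclideanSpace.equiv (Fin p) ℝ).toHomeomorph ⁻¹'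
        (Set.pi Set.univ fun _ => Set.Icc (0 : ℝ) 1) := by
    ext x
    simp only [Set.mem_setOf_eq, ContinuousLinearEquiv.coe_toHomeomorph, Set.mem_preimage,
      Set.mem_pi, Set.mem_univ, forall_true_left, Set.mem_Icc, true_implies]
    exact Iff.rfl
  have hc : IsCompact {x : EuclideanSpace ℝ (Fin p) | ∀ i, x i ∈ Set.Icc (0 : ℝ) 1} := by
    rw [h, Homeomorph.isCompact_preimage]
    exact isCompact_univ_pi fun _ => isCompact_Icc
  exact isCompact_iff_compactSpace.mp hc

/-- Lemma 2.2: let `f : X → Y` be a perfect continuous surjection of metrizable spaces, `ω` an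
open cover of `X`, `m, p` positive integers, `g ∈ C(X, I^p)`. If `(f △ g)|f⁻¹(y)` is an
`(m, ω)`-map for some `y`, then there is a neighborhood `U` of `y` such that `g|f⁻¹(U)` is an
`(m, ω)`-map. -/
theorem statement6 {X Y : Type} [TopologicalSpace X] [TopologicalSpace Y]
    [TopologicalSpace.MetrizableSpace X] [TopologicalSpace.MetrizableSpace Y]
    (f : X → Y) (hsurj : Function.Surjective f) (hperf : IsPerfectMap f)
    (ω : Set (Set X)) (hω : ∀ U ∈ ω, IsOpen U) (hcov : ⋃₀ ω = Set.univ)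
    (m p : ℕ) (hm : 1 ≤ m) (hp : 1 ≤ p) (g : C(X, Cube p)) (y : Y)
    (h : IsMOmegaMapOn m ω (fun x => (f x, g x)) (f ⁻¹' {y})) :
    ∃ U ∈ nhds y, IsMOmegaMapOn m ω (⇑g) (f ⁻¹' U) := by
  classical
  set K := f ⁻¹' {y} with hKdef
  have hKc : IsCompact K := hperf.2.2 y
  have key : ∀ c : Cube p, ∃ r : ℝ, 0 < r ∧ ∃ s : Finset (Set X),
      ↑s ⊆ ω ∧ s.card ≤ m ∧ K ∩ ⇑g ⁻¹' Metric.closedBall c r ⊆ ⋃₀ ↑s := by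
    intro c
    by_cases hc : c ∈ ⇑g '' K
    · obtain ⟨x, hxK, hxc⟩ := hc
      have hfx : f x = y := hxK
      have hz : ((y, c) : Y × Cube p) ∈ (fun x => (f x, g x)) '' K :=
        ⟨x, hxK, by simp [hfx, hxc]⟩
      obtain ⟨V, hV, s, hsω, hcard, hsub⟩ := h _ hz
      rw [mem_nhds_prod_iff] at hV
      obtain ⟨Uy, hUy, Wc, hWc, hUW⟩ := hV
      obtain ⟨r, hr, hball⟩ := Metric.nhds_basis_closedBall.mem_iff.1 hWc
      refine ⟨r, hr, s, hsω, hcard, ?_⟩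
      rintro x' ⟨hx'K, hx'b⟩
      refine hsub ⟨hx'K, hUW ⟨?_, ?_⟩⟩
      · have : f x' = y := hx'K
        simpa [this] using mem_of_mem_nhds hUy
      · exact hball hx'b
    · have hgK : IsClosed (⇑g '' K) := (hKc.image g.continuous).isClosed
      have hmem : (⇑g '' K)ᶜ ∈ nhds c := hgK.isOpen_compl.mem_nhds hc
      obtain ⟨r, hr, hball⟩ := Metric.nhds_basis_closedBall.mem_iff.1 hmem
      refine ⟨r, hr, ∅, by simp, by simp, ?_⟩
      rintro x' ⟨hx'K, hx'b⟩
      exact absurd (Set.mem_image_of_mem _ hx'K) (hball hx'b)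
  choose r hr s hsω hcard hsub using key
  have hcover : (Set.univ : Set (Cube p)) ⊆ ⋃ c, Metric.ball c (r c) :=
    fun z _ => Set.mem_iUnion.2 ⟨z, Metric.mem_ball_self (hr z)⟩
  obtain ⟨t, ht⟩ := isCompact_univ.elim_finite_subcover _
    (fun c : Cube p => Metric.isOpen_ball) hcover
  set B : Cube p → Set X := fun c => ⇑g ⁻¹' Metric.closedBall c (r c) \ ⋃₀ ↑(s c) with hBdef
  have hBclosed : ∀ c, IsClosed (B c) := fun c =>
    (Metric.isClosed_closedBall.preimage g.continuous).sdiff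
      (isOpen_sUnion fun u hu => hω u (hsω c hu))
  have hBK : ∀ c, B c ∩ K = ∅ := by
    intro c
    ext x
    simp only [Set.mem_inter_iff, Set.mem_empty_iff_false, iff_false]
    rintro ⟨⟨hxb, hxns⟩, hxK⟩
    exact hxns (hsub c ⟨hxK, hxb⟩)
  refine ⟨(⋃ c ∈ t, f '' B c)ᶜ, ?_, ?_⟩
  · have hcl : IsClosed (⋃ c ∈ t, f '' B c) :=
      t.finite_toSet.isClosed_biUnion fun c _ => hperf.2.1 _ (hBclosed c)
    refine hcl.isOpen_compl.mem_nhds ?_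
    simp only [Set.mem_compl_iff, Set.mem_iUnion]
    rintro ⟨c, hct, x, hxB, hfx⟩
    have hxK : x ∈ K := by simpa [hKdef] using hfx
    have := hBK c
    rw [Set.eq_empty_iff_forall_notMem] at this
    exact this x ⟨hxB, hxK⟩
  · rintro z ⟨x0, hx0, rfl⟩
    have hz : g x0 ∈ ⋃ c ∈ t, Metric.ball c (r c) := ht (Set.mem_univ _)
    simp only [Set.mem_iUnion] at hz
    obtain ⟨c, hct, hzball⟩ := hz
    refine ⟨Metric.ball c (r c), Metric.isOpen_ball.mem_nhds hzball, s c, hsω c, hcard c, ?_⟩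
    rintro x ⟨hxU, hxV⟩
    by_contra hx
    have hxB : x ∈ B c := ⟨Metric.ball_subset_closedBall hxV, hx⟩
    exact hxU (Set.mem_iUnion.2 ⟨c, Set.mem_iUnion.2 ⟨hct, Set.mem_image_of_mem f hxB⟩⟩)
end

section
/- Let f : X → Y be a perfect continuous surjection between metrizable spaces, ω an open cover of X, and m, p positive integers. If g ∈ C(X, I^p) is such that for every y ∈ Y the restriction of f△g to the fiber f⁻¹(y) is an (m,ω)-map, then f△g : X → Y × I^p is itself an (m,ω)-map. -/
open Set Topology

/-- Corollary 2.3: let `f : X → Y` be a perfect continuous surjection of metrizable spaces, `ω`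
an open cover of `X`, `m, p` positive integers. If `g ∈ C(X, I^p)` is such that
`(f △ g)|f⁻¹(y)` is an `(m, ω)`-map for every `y ∈ Y`, then `f △ g` is an `(m, ω)`-map. -/
theorem statement7 {X Y : Type} [TopologicalSpace X] [TopologicalSpace Y]
    [TopologicalSpace.MetrizableSpace X] [TopologicalSpace.MetrizableSpace Y]
    (f : X → Y) (hsurj : Function.Surjective f) (hperf : IsPerfectMap f)
    (ω : Set (Set X)) (hω : ∀ U ∈ ω, IsOpen U) (hcov : ⋃₀ ω = Set.univ)
    (m p : ℕ) (hm : 1 ≤ m) (hp : 1 ≤ p) (g : C(X, Cube p))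
    (h : ∀ y : Y, IsMOmegaMapOn m ω (fun x => (f x, g x)) (f ⁻¹' {y})) :
    IsMOmegaMapOn m ω (fun x => (f x, g x)) Set.univ := by
  classical
  obtain ⟨fc, fcl, fcomp⟩ := hperf
  have hproper : IsProperMap f := isProperMap_iff_isClosedMap_and_compact_fibers.mpr ⟨fc, fcl, fcomp⟩
  -- the graph map x ↦ (x, g x) is a closed embedding
  have hgraph : Topology.IsClosedEmbedding (fun x : X => (x, g x)) := by
    refine ⟨isEmbedding_graph g.continuous, ?_⟩
    have : Set.range (fun x : X => (x, g x)) =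
        (fun p : X × Cube p => (g p.1, p.2)) ⁻¹' Set.diagonal (Cube p) := by
      ext ⟨a, b⟩
      simp [Set.diagonal, eq_comm, Prod.ext_iff]
    rw [this]
    exact isClosed_diagonal.preimage ((g.continuous.comp continuous_fst).prodMk continuous_snd)
  have hprod : IsProperMap (Prod.map f (id : Cube p → Cube p)) :=
    hproper.prodMap isProperMap_id
  have hHproper : IsProperMap (fun x : X => (f x, g x)) := by
    have := hprod.comp hgraph.isProperMap
    exact this
  have hHclosed : IsClosedMap (fun x : X => (f x, g x)) := hHproper.isClosedMap
  intro z hz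
  obtain ⟨x₀, -, hx₀⟩ := hz
  obtain ⟨V, hV, s, hsω, hscard, hsub⟩ := h (f x₀) z ⟨x₀, Set.mem_preimage.mpr (Set.mem_singleton _), hx₀⟩
  set U := ⋃₀ (↑s : Set (Set X)) with hU
  have hUsub : f ⁻¹' {f x₀} ∩ (fun x => (f x, g x)) ⁻¹' V ⊆ U := hsub
  refine ⟨((fun x => (f x, g x)) '' Uᶜ)ᶜ, ?_, s, hsω, hscard, ?_⟩
  · refine IsOpen.mem_nhds (hHclosed Uᶜ ?_).isOpen_compl ?_
    · have : IsOpen U := isOpen_sUnion fun t ht => hω t (hsω ht)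
      exact this.isClosed_compl
    · rintro ⟨x, hxU, hxz⟩
      apply hxU
      apply hUsub
      have hfx : f x = f x₀ := by
        have := congrArg Prod.fst hxz
        simpa [← hx₀] using this
      refine ⟨by simpa using hfx, ?_⟩
      simp only [Set.mem_preimage]
      have : (f x, g x) = z := hxz
      rw [this]
      exact mem_of_mem_nhds hV
  · rintro x ⟨-, hx⟩
    by_contra hxU
    exact hx ⟨x, hxU, rfl⟩
end

section
/- Let f : X → Y be a perfect continuous surjection between metrizable spaces, ω an open cover of X, and m, p positive integers. Then for any closed subset K ⊆ X, the set C_{(m,ω)}(X|K, I^p) = {g ∈ C(X, I^p) : the restriction of f△g to K is an (m,ω)-map} is open in C(X, I^p) with respect to the source limitation topology. -/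
open Set Topology

/-- Lemma 2.4: let `f : X → Y` be a perfect continuous surjection of metrizable spaces, `ω` an
open cover of `X`, `m, p` positive integers. For any closed `K ⊆ X` the set
`C_{(m,ω)}(X|K, I^p)` of all `g ∈ C(X, I^p)` with `(f △ g)|K` an `(m, ω)`-map is open in
`C(X, I^p)` with the source limitation topology. -/
theorem statement8 {X Y : Type} [TopologicalSpace X] [TopologicalSpace Y]
    [TopologicalSpace.MetrizableSpace X] [TopologicalSpace.MetrizableSpace Y]
    (f : X → Y) (hsurj : Function.Surjective f) (hperf : IsPerfectMap f)
    (ω : Set (Set X)) (hω : ∀ U ∈ ω, IsOpen U) (hcov : ⋃₀ ω = Set.univ)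
    (m p : ℕ) (hm : 1 ≤ m) (hp : 1 ≤ p) (K : Set X) (hK : IsClosed K) :
    letI : TopologicalSpace C(X, Cube p) := sourceLimitation X (Cube p)
    IsOpen {g : C(X, Cube p) | IsMOmegaMapOn m ω (fun x => (f x, g x)) K} := by
  intro g hg
  cases isEmpty_or_nonempty Y with
  | inl hY =>
    refine ⟨fun _ => 1, continuous_const, fun _ => one_pos, fun h _ => ?_⟩
    rintro ⟨zy, zc⟩ _
    exact (hY.false zy).elim
  | inr hY =>
  letI : MetricSpace Y := TopologicalSpace.metrizableSpaceMetric Y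
  -- Step 1: for each y, find ε and a neighborhood O of y with the key covering property
  have key : ∀ y : Y, ∃ ε : ℝ, 0 < ε ∧ ε ≤ 1 ∧ ∃ O : Set Y, IsOpen O ∧ y ∈ O ∧
      ∀ x₀ ∈ K, f x₀ ∈ O → ∃ s : Finset (Set X), ↑s ⊆ ω ∧ s.card ≤ m ∧
        ∀ x ∈ K, f x ∈ O → dist (g x) (g x₀) < ε → x ∈ ⋃₀ (↑s : Set (Set X)) := by
    intro y
    by_cases hKy : (K ∩ f ⁻¹' {y}).Nonempty
    · -- main case: nonempty fiber over y
      have hfib : ∀ x' : ↥(K ∩ f ⁻¹' {y}), ∃ (Ox : Set Y) (Wx : Set (Cube p)),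
          IsOpen Ox ∧ y ∈ Ox ∧ IsOpen Wx ∧ g x' ∈ Wx ∧
          ∃ s : Finset (Set X), ↑s ⊆ ω ∧ s.card ≤ m ∧
            K ∩ (fun x => (f x, g x)) ⁻¹' (Ox ×ˢ Wx) ⊆ ⋃₀ (↑s : Set (Set X)) := by
        rintro ⟨x', hx'⟩
        have hfx' : f x' = y := hx'.2
        have hz : ((y, g x') : Y × Cube p) ∈ (fun x => (f x, g x)) '' K := by
          exact ⟨x', hx'.1, by simp [hfx']⟩
        obtain ⟨V, hV, s, hsω, hsc, hscov⟩ := hg _ hz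
        rw [mem_nhds_prod_iff] at hV
        obtain ⟨u, hu, v, hv, huv⟩ := hV
        obtain ⟨Ox, hOxu, hOxo, hyOx⟩ := mem_nhds_iff.1 hu
        obtain ⟨Wx, hWxv, hWxo, hgWx⟩ := mem_nhds_iff.1 hv
        refine ⟨Ox, Wx, hOxo, hyOx, hWxo, hgWx, s, hsω, hsc, ?_⟩
        refine subset_trans ?_ hscov
        intro x hx
        exact ⟨hx.1, huv ⟨hOxu hx.2.1, hWxv hx.2.2⟩⟩
      choose Ox Wx hOxo hyOx hWxo hgWx sx hsxω hsxc hsxcov using hfib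
      -- the fiber is compact
      have hKyc : IsCompact (K ∩ f ⁻¹' {y}) := (hperf.2.2 y).inter_left hK
      have hgKyc : IsCompact (g '' (K ∩ f ⁻¹' {y})) := hKyc.image g.continuous
      -- finite subcover
      have hcov1 : g '' (K ∩ f ⁻¹' {y}) ⊆ ⋃ i : ↥(K ∩ f ⁻¹' {y}), Wx i := by
        rintro _ ⟨x'', hx'', rfl⟩
        exact Set.mem_iUnion.2 ⟨⟨x'', hx''⟩, hgWx ⟨x'', hx''⟩⟩
      obtain ⟨t, ht⟩ := hgKyc.elim_finite_subcover _ hWxo hcov1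
      -- Lebesgue number for the finite subcover
      have ht' : g '' (K ∩ f ⁻¹' {y}) ⊆ ⋃ i : ↥t, Wx i.1 := by
        intro z hz
        obtain ⟨i, hi, hzi⟩ := Set.mem_iUnion₂.1 (ht hz)
        exact Set.mem_iUnion.2 ⟨⟨i, hi⟩, hzi⟩
      obtain ⟨δ, hδ0, hleb⟩ := lebesgue_number_lemma_of_metric hgKyc
        (c := fun i : ↥t => Wx i.1) (fun i => hWxo i.1) ht'
      set ε : ℝ := min (δ / 2) 1 with hε
      have hε0 : 0 < ε := lt_min (by linarith) one_pos
      -- the open neighborhood N of g(K_y)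
      set N : Set (Cube p) := ⋃ z ∈ g '' (K ∩ f ⁻¹' {y}), Metric.ball z ε with hN
      have hNo : IsOpen N := isOpen_biUnion fun _ _ => Metric.isOpen_ball
      set A : Set X := K ∩ (⇑g ⁻¹' N)ᶜ with hA
      have hAc : IsClosed A := hK.inter (hNo.preimage g.continuous).isClosed_compl
      set O : Set Y := (⋂ i ∈ t, Ox i) ∩ (f '' A)ᶜ with hO
      have hOo : IsOpen O :=
        (isOpen_biInter_finset fun i _ => hOxo i).inter (hperf.2.1 A hAc).isOpen_compl
      have hyO : y ∈ O := by
        refine ⟨Set.mem_biInter fun i _ => hyOx i, ?_⟩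
        rintro ⟨x, hxA, hfx⟩
        refine hxA.2 ?_
        have hxKy : x ∈ K ∩ f ⁻¹' {y} := ⟨hxA.1, hfx⟩
        exact Set.mem_biUnion ⟨x, hxKy, rfl⟩ (Metric.mem_ball_self hε0)
      refine ⟨ε, hε0, min_le_right _ _, O, hOo, hyO, ?_⟩
      intro x₀ hx₀K hfx₀O
      -- g x₀ is ε-close to the image of the fiber
      have hgx₀N : g x₀ ∈ N := by
        by_contra hc
        exact hfx₀O.2 ⟨x₀, ⟨hx₀K, hc⟩, rfl⟩
      obtain ⟨z₀, hz₀, hz₀d⟩ := Set.mem_iUnion₂.1 hgx₀N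
      obtain ⟨i, hi⟩ := hleb z₀ hz₀
      refine ⟨sx i.1, hsxω i.1, hsxc i.1, ?_⟩
      intro x hxK hfxO hdx
      refine hsxcov i.1 ⟨hxK, ?_, ?_⟩
      · exact Set.mem_iInter₂.1 hfxO.1 i.1 i.2
      · refine hi ?_
        rw [Metric.mem_ball] at hz₀d ⊢
        have h1 : dist (g x) z₀ ≤ dist (g x) (g x₀) + dist (g x₀) z₀ := dist_triangle _ _ _
        have h2 : ε ≤ δ / 2 := min_le_left _ _
        linarith
    · -- empty fiber: y is outside the closed set f(K)
      refine ⟨1, one_pos, le_refl 1, (f '' K)ᶜ, (hperf.2.1 K hK).isOpen_compl, ?_, ?_⟩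
      · rintro ⟨x, hxK, hfx⟩
        exact hKy ⟨x, hxK, hfx⟩
      · intro x₀ hx₀K hfx₀
        exact absurd ⟨x₀, hx₀K, rfl⟩ hfx₀
  choose ε hε0 hε1 O hOo hyO hP using key
  -- radii
  have hr : ∀ y : Y, ∃ ρ : ℝ, 0 < ρ ∧ ρ ≤ ε y / 8 ∧ Metric.ball y (2 * ρ) ⊆ O y := by
    intro y
    obtain ⟨δ, hδ0, hδ⟩ := Metric.isOpen_iff.1 (hOo y) y (hyO y)
    refine ⟨min (δ / 2) (ε y / 8), lt_min (by linarith) (by linarith [hε0 y]), min_le_right _ _,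
      ?_⟩
    refine subset_trans (Metric.ball_subset_ball ?_) hδ
    have := min_le_left (δ / 2) (ε y / 8)
    linarith
  choose r hr0 hrε hrO using hr
  set β : Y → ℝ := fun y' => ⨆ y, max 0 (r y - dist y y') with hβdef
  have hbdd : ∀ y' : Y, BddAbove (Set.range fun y => max 0 (r y - dist y y')) := by
    intro y'
    refine ⟨1 / 8, ?_⟩
    rintro _ ⟨y, rfl⟩
    have h1 := hrε y
    have h2 := hε1 y
    have h3 := dist_nonneg (x := y) (y := y')
    exact max_le (by norm_num) (by linarith)
  have hβ0 : ∀ y' : Y, 0 < β y' := by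
    intro y'
    have h1 : max 0 (r y' - dist y' y') ≤ β y' := le_ciSup (hbdd y') y'
    rw [dist_self] at h1
    have := hr0 y'
    have h2 : r y' ≤ max 0 (r y' - 0) := by simp
    linarith
  have hβle : ∀ y₁ y₂ : Y, β y₁ ≤ β y₂ + dist y₁ y₂ := by
    intro y₁ y₂
    refine ciSup_le fun y => ?_
    have h1 : max 0 (r y - dist y y₂) ≤ β y₂ := le_ciSup (hbdd y₂) y
    have h2 : dist y y₁ ≥ dist y y₂ - dist y₁ y₂ := by
      have := dist_triangle y y₁ y₂
      have := dist_comm y₁ y₂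
      linarith [dist_triangle y y₂ y₁, dist_comm y₂ y₁]
    have h3 : (0 : ℝ) ≤ dist y₁ y₂ := dist_nonneg
    have h4 : (0 : ℝ) ≤ max 0 (r y - dist y y₂) := le_max_left _ _
    have h5 : r y - dist y y₂ ≤ max 0 (r y - dist y y₂) := le_max_right _ _
    refine max_le (by linarith) (by linarith)
  have hβc : Continuous β := by
    refine (LipschitzWith.of_dist_le_mul (K := 1) fun y₁ y₂ => ?_).continuous
    rw [Real.dist_eq, NNReal.coe_one, one_mul, abs_le]
    constructor
    · have := hβle y₂ y₁
      have := dist_comm y₁ y₂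
      linarith [hβle y₂ y₁, dist_comm y₂ y₁]
    · linarith [hβle y₁ y₂]
  refine ⟨fun x => β (f x), hβc.comp hperf.1, fun x => hβ0 (f x), ?_⟩
  intro h hh
  rintro z ⟨x₀, hx₀K, rfl⟩
  -- find a suitable y
  have hhalf : β (f x₀) / 2 < β (f x₀) := by linarith [hβ0 (f x₀)]
  obtain ⟨y, hy⟩ := exists_lt_of_lt_ciSup hhalf
  have hy' : β (f x₀) / 2 < r y - dist y (f x₀) := by
    rcases lt_max_iff.1 hy with h1 | h1
    · linarith [hβ0 (f x₀)]
    · exact h1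
  have hx₀O : f x₀ ∈ O y := by
    refine hrO y ?_
    rw [Metric.mem_ball, dist_comm]
    have := hβ0 (f x₀)
    have := hr0 y
    linarith [dist_nonneg (x := y) (y := f x₀)]
  have hβsmall : β (f x₀) < ε y / 4 := by
    have h1 := hrε y
    have h2 := dist_nonneg (x := y) (y := f x₀)
    linarith
  obtain ⟨s, hsω, hsc, hscov⟩ := hP y x₀ hx₀K hx₀O
  refine ⟨(O y ∩ {y'' | β y'' < ε y / 4}) ×ˢ Metric.ball (h x₀) (ε y / 4), ?_, s, hsω, hsc, ?_⟩
  · refine IsOpen.mem_nhds ?_ ?_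
    · exact ((hOo y).inter (isOpen_lt hβc continuous_const)).prod Metric.isOpen_ball
    · exact ⟨⟨hx₀O, hβsmall⟩, Metric.mem_ball_self (by linarith [hε0 y])⟩
  · rintro x ⟨hxK, ⟨hfxO, hβx⟩, hhx⟩
    rw [Metric.mem_ball] at hhx
    refine hscov x hxK hfxO ?_
    have h1 : dist (g x) (h x) ≤ β (f x) := hh x
    have h2 : dist (g x₀) (h x₀) ≤ β (f x₀) := hh x₀
    have h3 : dist (g x) (g x₀) ≤ dist (g x) (h x) + dist (h x) (h x₀) + dist (h x₀) (g x₀) :=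
      dist_triangle4 _ _ _ _
    have h4 : dist (h x₀) (g x₀) = dist (g x₀) (h x₀) := dist_comm _ _
    have hε0y := hε0 y
    have : β (f x) < ε y / 4 := hβx
    linarith
end

section
/- Let f : X → Y be a perfect k-dimensional continuous surjection of metrizable spaces with dim Y ≤ m, let p ≥ 1 be an integer, and let ω be an open cover of X. Equip C(X, I^{k+p}) with the uniform convergence topology. Then the set-valued map ψ from Y into C(X, I^{k+p}) defined by ψ(y) = C(X, I^{k+p}) \ {g ∈ C(X, I^{k+p}) : the restriction of f△g to f⁻¹(y) is an (m+k-p+2, ω)-map} has a closed graph in Y × C(X, I^{k+p}). -/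
open Set Topology

/-- Lemma 3.1: let `f : X → Y` be a perfect `k`-dimensional continuous surjection of metrizable
spaces with `dim Y ≤ m`, `p ≥ 1` an integer, `ω` an open cover of `X`, and equip
`C(X, I^{k+p})` with the uniform convergence topology. The set-valued map
`ψ(y) = C(X, I^{k+p}) \ {g : (f △ g)|f⁻¹(y) is an (m+k-p+2, ω)-map}` has a closed graph. -/
theorem statement11 {X Y : Type} [TopologicalSpace X] [TopologicalSpace Y]
    [TopologicalSpace.MetrizableSpace X] [TopologicalSpace.MetrizableSpace Y]
    (f : X → Y) (hsurj : Function.Surjective f) (hperf : IsPerfectMap f)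
    (k m : ℕ) (hdimf : DimFibersLE f k) (hdimY : CovDimLE Y m)
    (p : ℕ) (hp : 1 ≤ p)
    (ω : Set (Set X)) (hω : ∀ U ∈ ω, IsOpen U) (hcov : ⋃₀ ω = Set.univ) :
    letI : TopologicalSpace C(X, Cube (k + p)) := uniformConvergence X (Cube (k + p))
    IsClosed {yg : Y × C(X, Cube (k + p)) |
        ¬ IsMOmegaMapOn (((m : ℤ) + k - p + 2).toNat) ω
            (fun x => (f x, yg.2 x)) (f ⁻¹' {yg.1})} := by
  letI : TopologicalSpace C(X, Cube (k + p)) := uniformConvergence X (Cube (k + p))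
  set N := (((m : ℤ) + ↑k - ↑p + 2).toNat) with hN
  rw [← isOpen_compl_iff, isOpen_iff_mem_nhds]
  rintro ⟨y₀, g₀⟩ hmem
  rw [Set.mem_compl_iff, Set.mem_setOf_eq, not_not] at hmem
  set F : Set X := f ⁻¹' {y₀} with hFdef
  have hFc : IsCompact F := hperf.2.2 y₀
  have key : ∀ x : F, ∃ (W : Set Y) (ε : ℝ) (s : Finset (Set X)),
      IsOpen W ∧ y₀ ∈ W ∧ 0 < ε ∧ ↑s ⊆ ω ∧ s.card ≤ N ∧
      ∀ x' : X, f x' = y₀ → f x' ∈ W → dist (g₀ x') (g₀ x.1) < ε → x' ∈ ⋃₀ ↑s := by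
    rintro ⟨x, hx⟩
    have hfx : f x = y₀ := hx
    have hz : ((y₀, g₀ x) : Y × Cube (k + p)) ∈ (fun x => (f x, g₀ x)) '' F :=
      ⟨x, hx, by simp [hfx]⟩
    obtain ⟨V, hV, s, hsω, hcard, hsub⟩ := hmem _ hz
    rw [mem_nhds_prod_iff] at hV
    obtain ⟨u, hu, v, hv, huv⟩ := hV
    obtain ⟨W, hWu, hWo, hWy⟩ := mem_nhds_iff.mp hu
    obtain ⟨ε, hε, hball⟩ := Metric.mem_nhds_iff.mp hv
    refine ⟨W, ε, s, hWo, hWy, hε, hsω, hcard, ?_⟩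
    intro x' hfx' hWx' hd
    exact hsub ⟨hfx', huv ⟨hWu hWx', hball hd⟩⟩
  choose W ε s hWo hWy hε hsω hcard hP using key
  obtain ⟨t, ht⟩ := hFc.elim_finite_subcover
    (fun i : F => f ⁻¹' (W i) ∩ g₀ ⁻¹' (Metric.ball (g₀ i.1) (ε i / 3)))
    (fun i => ((hWo i).preimage hperf.1).inter (Metric.isOpen_ball.preimage g₀.continuous))
    (fun x hx => Set.mem_iUnion.mpr ⟨⟨x, hx⟩,
      ⟨by rw [Set.mem_preimage, show f x = y₀ from hx]; exact hWy _,
       by simp only [Set.mem_preimage, Metric.mem_ball, dist_self]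
          exact div_pos (hε _) (by norm_num)⟩⟩)
  obtain ⟨x₀', hx₀'⟩ := hsurj y₀
  have hx₀'F : x₀' ∈ F := hx₀'
  obtain ⟨i₀, hi₀t, -⟩ := Set.mem_iUnion₂.mp (ht hx₀'F)
  have htne : t.Nonempty := ⟨i₀, hi₀t⟩
  set εm : ℝ := t.inf' htne (fun i => ε i) with hεm
  have hεm0 : 0 < εm := by
    rw [hεm, Finset.lt_inf'_iff]
    exact fun i _ => hε i
  set δ : ℝ := εm / 12 with hδ
  have hδ0 : 0 < δ := by positivity
  set D : F → Set X := fun i =>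
    (g₀ ⁻¹' Metric.closedBall (g₀ i.1) (2 * ε i / 3)) \ ⋃₀ ↑(s i) with hDdef
  have hDc : ∀ i, IsClosed (D i) := fun i =>
    (Metric.isClosed_closedBall.preimage g₀.continuous).sdiff
      (isOpen_sUnion fun u hu => hω u (hsω i hu))
  set Cs : Set X := (⋃ i ∈ t, (f ⁻¹' (W i) ∩ g₀ ⁻¹' (Metric.ball (g₀ i.1) (ε i / 3))))ᶜ
    with hCsdef
  have hCsc : IsClosed Cs := isClosed_compl_iff.mpr (isOpen_biUnion fun i _ =>
    ((hWo i).preimage hperf.1).inter (Metric.isOpen_ball.preimage g₀.continuous))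
  set W₀ : Set Y := ((⋂ i ∈ t, W i) ∩ (f '' Cs)ᶜ) ∩ ⋂ i ∈ t, (f '' (D i))ᶜ with hW₀def
  have hW₀o : IsOpen W₀ := by
    refine (((isOpen_biInter_finset fun i _ => hWo i).inter
      (hperf.2.1 _ hCsc).isOpen_compl)).inter
      (isOpen_biInter_finset fun i _ => (hperf.2.1 _ (hDc i)).isOpen_compl)
  have hy₀W₀ : y₀ ∈ W₀ := by
    refine ⟨⟨Set.mem_iInter₂.mpr fun i _ => hWy i, ?_⟩, Set.mem_iInter₂.mpr fun i hit => ?_⟩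
    · rintro ⟨x, hxC, hfx⟩
      exact hxC (ht (show x ∈ F from hfx))
    · rintro ⟨x, hxD, hfx⟩
      refine hxD.2 (hP i x hfx (hfx ▸ hWy i) ?_)
      have h1 : dist (g₀ x) (g₀ i.1) ≤ 2 * ε i / 3 := hxD.1
      have := hε i
      linarith
  set G : Set C(X, Cube (k + p)) := {g | ∀ x, dist (g x) (g₀ x) < δ} with hGdef
  have hG : G ∈ @nhds _ (uniformConvergence X (Cube (k + p))) g₀ := by
    rw [uniformConvergence, nhds_induced, Filter.mem_comap]
    refine ⟨{u | (UniformFun.ofFun ⇑g₀, u) ∈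
        UniformFun.gen X (Cube (k + p)) {q | dist q.1 q.2 < δ}},
      (UniformFun.hasBasis_nhds X (Cube (k + p)) _).mem_of_mem
        (Metric.dist_mem_uniformity hδ0), ?_⟩
    intro g hg x
    exact (dist_comm (g₀ x) (g x) ▸ hg x : dist (g x) (g₀ x) < δ)
  refine Filter.mem_of_superset (prod_mem_nhds (hW₀o.mem_nhds hy₀W₀) hG) ?_
  rintro ⟨y, g⟩ ⟨hyW, hgG⟩
  simp only [Set.mem_compl_iff, Set.mem_setOf_eq, not_not]
  rintro z ⟨x₀, hx₀, rfl⟩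
  have hfx₀ : f x₀ = y := hx₀
  have hx₀mem : x₀ ∈ ⋃ i ∈ t, (f ⁻¹' (W i) ∩ g₀ ⁻¹' (Metric.ball (g₀ i.1) (ε i / 3))) := by
    by_contra hc
    exact hyW.1.2 ⟨x₀, hc, hfx₀⟩
  obtain ⟨i, hit, -, hx₀b⟩ := Set.mem_iUnion₂.mp hx₀mem
  have hεi : εm ≤ ε i := Finset.inf'_le _ hit
  refine ⟨W₀ ×ˢ Metric.ball (g x₀) δ, ?_, s i, hsω i, hcard i, ?_⟩
  · exact prod_mem_nhds (hW₀o.mem_nhds (hfx₀ ▸ hyW)) (Metric.ball_mem_nhds _ hδ0)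
  · rintro x ⟨hxy, -, hxb⟩
    have hxyeq : f x = y := hxy
    have hd1 : dist (g x) (g x₀) < δ := hxb
    have hd2 : dist (g x) (g₀ x) < δ := hgG x
    have hd3 : dist (g x₀) (g₀ x₀) < δ := hgG x₀
    have hd4 : dist (g₀ x₀) (g₀ i.1) < ε i / 3 := hx₀b
    have htri1 : dist (g₀ x) (g₀ i.1) ≤
        dist (g₀ x) (g x) + dist (g x) (g₀ x₀) + dist (g₀ x₀) (g₀ i.1) :=
      dist_triangle4 _ _ _ _
    have htri2 : dist (g x) (g₀ x₀) ≤ dist (g x) (g x₀) + dist (g x₀) (g₀ x₀) :=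
      dist_triangle _ _ _
    have hd2' : dist (g₀ x) (g x) < δ := by rw [dist_comm]; exact hd2
    have hball : dist (g₀ x) (g₀ i.1) ≤ 2 * ε i / 3 := by
      have h12 : δ = εm / 12 := hδ
      linarith
    by_contra hc
    have hxD : x ∈ D i := ⟨hball, hc⟩
    exact Set.mem_iInter₂.mp hyW.2 i hit ⟨x, hxD, hxyeq⟩
end

section
/- Let X be a metrizable space, A ⊆ X a closed subset, and n a positive integer. Then the restriction map π : C(X, I^n) → C(A, I^n), π(g) = g|A, is continuous, open, and surjective when both function spaces are equipped with the source limitation topology. -/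
open Set Topology

noncomputable section

def cubeHomeo (n : ℕ) : Cube n ≃ₜ (Fin n → Set.Icc (0:ℝ) 1) where
  toFun x i := ⟨x.1 i, x.2 i⟩
  invFun y := ⟨(WithLp.equiv 2 (Fin n → ℝ)).symm fun i => (y i : ℝ), fun i => (y i).2⟩
  left_inv x := rfl
  right_inv y := rfl
  continuous_toFun := continuous_pi fun i =>
    (((continuous_apply i).comp (PiLp.continuous_ofLp 2 (fun _ : Fin n => ℝ))).comp
      continuous_subtype_val).subtype_mk _
  continuous_invFun :=
    (((PiLp.continuous_toLp 2 (fun _ : Fin n => ℝ)).comp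
      (continuous_pi fun i => continuous_subtype_val.comp (continuous_apply i)))).subtype_mk _

instance cubeTietze (n : ℕ) : TietzeExtension (Cube n) := by
  have h1 : TietzeExtension (Set.Icc (0:ℝ) 1) :=
    TietzeExtension.of_retract ⟨Subtype.val, continuous_subtype_val⟩
      ⟨Set.projIcc 0 1 zero_le_one, continuous_projIcc⟩
      (by ext x; simp)
  exact TietzeExtension.of_homeo (cubeHomeo n)

lemma controlled_ext {X : Type} [TopologicalSpace X] [NormalSpace X] {A : Set X}
    (hA : IsClosed A) {n : ℕ} (g : C(X, Cube n)) (α : X → ℝ) (hαc : Continuous α)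
    (hα0 : ∀ x, 0 < α x) (h' : C(A, Cube n)) (hd : ∀ a : A, dist (g a) (h' a) ≤ α a / 2) :
    ∃ h : C(X, Cube n), h.restrict A = h' ∧ ∀ x, dist (g x) (h x) ≤ α x := by
  obtain ⟨H, hH⟩ := h'.exists_restrict_eq hA
  have hHa : ∀ a : A, H a = h' a := fun a => congrFun (congrArg DFunLike.coe hH) a
  set W : Set X := {x | dist (g x) (H x) < α x} with hW
  have hWopen : IsOpen W := isOpen_lt (g.continuous.dist H.continuous) hαc
  have hAW : A ⊆ W := by
    intro a ha
    have := hd ⟨a, ha⟩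
    rw [← hHa ⟨a, ha⟩] at this
    exact this.trans_lt (half_lt_self (hα0 a))
  obtain ⟨lam, hlam0, hlam1, hlamm⟩ := exists_continuous_zero_one_of_isClosed
    (isClosed_compl_iff.mpr hWopen) hA (by
      rw [disjoint_compl_left_iff_subset]; exact hAW)
  have hmem : ∀ x : X, ∀ i, ((1 - lam x) • (g x).1 + lam x • (H x).1) i ∈ Set.Icc (0:ℝ) 1 := by
    intro x i
    have := convex_Icc (0:ℝ) 1 ((g x).2 i) ((H x).2 i) (a := 1 - lam x) (b := lam x)
      (sub_nonneg.mpr (hlamm x).2) (hlamm x).1 (by ring)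
    simpa [PiLp.add_apply, PiLp.smul_apply, smul_eq_mul] using this
  refine ⟨⟨fun x => ⟨(1 - lam x) • (g x).1 + lam x • (H x).1, hmem x⟩, ?_⟩, ?_, ?_⟩
  · exact (((continuous_const.sub lam.continuous).smul
      (continuous_subtype_val.comp g.continuous)).add
      (lam.continuous.smul (continuous_subtype_val.comp H.continuous))).subtype_mk _
  · refine ContinuousMap.ext fun a => Subtype.ext ?_
    show (1 - lam a.1) • (g a.1).1 + lam a.1 • (H a.1).1 = (h' a).1
    rw [← hHa a]
    simp [hlam1 a.2]
  · intro x
    have hdist : dist (g x) (⟨(1 - lam x) • (g x).1 + lam x • (H x).1, hmem x⟩ : Cube n)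
        = lam x * dist (g x) (H x) := by
      rw [Subtype.dist_eq, Subtype.dist_eq]
      have hveq : (g x).1 - ((1 - lam x) • (g x).1 + lam x • (H x).1)
          = lam x • ((g x).1 - (H x).1) := by module
      rw [dist_eq_norm, hveq, norm_smul, Real.norm_eq_abs, abs_of_nonneg (hlamm x).1,
        ← dist_eq_norm]
    show dist (g x) (⟨(1 - lam x) • (g x).1 + lam x • (H x).1, hmem x⟩ : Cube n) ≤ α x
    rw [hdist]
    by_cases hx : x ∈ W
    · exact (mul_le_of_le_one_left dist_nonneg (hlamm x).2).trans (le_of_lt hx)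
    · rw [hlam0 hx]
      simpa using (hα0 x).le

end

/-- For a metrizable space `X`, a closed subset `A ⊆ X` and a positive integer `n`, the
restriction map `π : C(X, I^n) → C(A, I^n)`, `π(g) = g|A`, is continuous, open and surjective
when both function spaces carry the source limitation topology. -/
theorem statement14 {X : Type} [TopologicalSpace X] [TopologicalSpace.MetrizableSpace X]
    (A : Set X) (hA : IsClosed A) (n : ℕ) (hn : 1 ≤ n) :
    letI : TopologicalSpace C(X, Cube n) := sourceLimitation X (Cube n)
    letI : TopologicalSpace C(↥A, Cube n) := sourceLimitation ↥A (Cube n)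
    Continuous (fun g : C(X, Cube n) => g.restrict A) ∧
    IsOpenMap (fun g : C(X, Cube n) => g.restrict A) ∧
    Function.Surjective (fun g : C(X, Cube n) => g.restrict A) := by
  letI : MetricSpace X := TopologicalSpace.metrizableSpaceMetric X
  refine ⟨?_, ?_, ?_⟩
  · rw [continuous_def]
    intro U hU
    intro g hg
    obtain ⟨α, hαc, hα0, hball⟩ := hU (g.restrict A) hg
    rcases A.eq_empty_or_nonempty with hAe | hAne
    · refine ⟨fun _ => 1, continuous_const, fun _ => one_pos, fun h _ => ?_⟩
      have heq : h.restrict A = g.restrict A :=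
        ContinuousMap.ext fun a => (Set.eq_empty_iff_forall_notMem.mp hAe a.1 a.2).elim
      rw [Set.mem_preimage, heq]; exact hg
    · obtain ⟨γ, hγ⟩ :=
        (⟨α, hαc⟩ : C(↥A, ℝ)).exists_restrict_eq hA
      have hγa : ∀ a : ↥A, γ a.1 = α a := fun a => congrFun (congrArg DFunLike.coe hγ) a
      refine ⟨fun x => max (γ x) (Metric.infDist x A),
        γ.continuous.max (Metric.continuous_infDist_pt A), ?_, ?_⟩
      · intro x
        by_cases hx : x ∈ A
        · exact lt_max_of_lt_left (by rw [hγa ⟨x, hx⟩]; exact hα0 ⟨x, hx⟩)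
        · exact lt_max_of_lt_right ((hA.notMem_iff_infDist_pos hAne).mp hx)
      · intro h hh
        rw [Set.mem_preimage]
        refine hball fun a => ?_
        have := hh a.1
        dsimp only at this
        rw [Metric.infDist_zero_of_mem a.2, hγa a, max_eq_left (hα0 a).le] at this
        exact this
  · intro U hU
    intro f hf
    obtain ⟨g, hgU, rfl⟩ := hf
    obtain ⟨α, hαc, hα0, hball⟩ := hU g hgU
    refine ⟨fun a => α a / 2, (hαc.comp continuous_subtype_val).div_const 2,
      fun a => half_pos (hα0 a.1), ?_⟩
    intro h' hh'
    obtain ⟨h, hres, hdist⟩ := controlled_ext hA g α hαc hα0 h' hh'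
    exact ⟨h, hball hdist, hres⟩
  · intro f
    obtain ⟨g, hg⟩ := f.exists_restrict_eq hA
    exact ⟨g, hg⟩
end
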